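/- Let K ≥ 0 and δ > 0. Then there exist constants C > 0 and ε > 0 such that for every real h with 0 < h < ε, ∫_E (√(‖s‖² + t²) + h)⁻⁶ d(s,t) ≥ C·h⁻³, where E = {(s,t) ∈ ℝ² × ℝ : K‖s‖ < t and ‖s‖² + t² < δ²} and the integral is with respect to three-dimensional Lebesgue measure on ℝ² × ℝ ≅ ℝ³. (The core scaling estimate, combining (B.7)–(B.9), in the proof of Lemma B.2.) -/

import Mathlib

open MeasureTheory Filter
open scoped ENNReal Topology

/-- **The core scaling estimate (B.7)–(B.9) in the proof of Lemma B.2.** For `K ≥ 0` and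
`δ > 0` there are `C > 0` and `ε > 0` such that for every `0 < h < ε`,
`∫_E (√(‖s‖² + t²) + h)⁻⁶ d(s,t) ≥ C h⁻³`, where
`E = {(s,t) ∈ ℝ² × ℝ : K‖s‖ < t, ‖s‖² + t² < δ²}`. -/
theorem scaling_estimate (K δ : ℝ) (hK : 0 ≤ K) (hδ : 0 < δ) :
    ∃ C > (0 : ℝ), ∃ ε > (0 : ℝ), ∀ h : ℝ, 0 < h → h < ε →
      ENNReal.ofReal (C / h ^ 3) ≤
        ∫⁻ p in {p : EuclideanSpace ℝ (Fin 2) × ℝ |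
            K * ‖p.1‖ < p.2 ∧ ‖p.1‖ ^ 2 + p.2 ^ 2 < δ ^ 2},
          ENNReal.ofReal (1 / (Real.sqrt (‖p.1‖ ^ 2 + p.2 ^ 2) + h) ^ 6) := by
  set V : ℝ≥0∞ := volume (Metric.ball (0 : EuclideanSpace ℝ (Fin 2)) 1) with hV
  have hV0 : 0 < V := Metric.measure_ball_pos _ _ one_pos
  have hVtop : V ≠ ⊤ := measure_ball_lt_top.ne
  have hVt0 : 0 < V.toReal := ENNReal.toReal_pos hV0.ne' hVtop
  have hK1 : (0:ℝ) < K + 1 := by linarith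
  refine ⟨V.toReal / (1280 * (K + 1) ^ 2), by positivity, δ, hδ, ?_⟩
  intro h h0 hhδ
  set r : ℝ := h / (2 * (K + 1)) with hr
  have hr0 : 0 < r := by positivity
  have hr2 : r ≤ h / 2 := by
    rw [hr, div_le_div_iff₀ (by positivity) two_pos]; nlinarith
  set A : Set (EuclideanSpace ℝ (Fin 2) × ℝ) :=
    Metric.ball (0) r ×ˢ Set.Ioo (h / 2) (7 * h / 10) with hA
  have hsub : A ⊆ {p : EuclideanSpace ℝ (Fin 2) × ℝ |
      K * ‖p.1‖ < p.2 ∧ ‖p.1‖ ^ 2 + p.2 ^ 2 < δ ^ 2} := by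
    rintro ⟨s, t⟩ ⟨hs, ht1, ht2⟩
    simp only [Metric.mem_ball, dist_zero_right] at hs
    have hs2 : ‖s‖ < h / 2 := hs.trans_le hr2
    have hsn : 0 ≤ ‖s‖ := norm_nonneg s
    constructor
    · have h1 : K * ‖s‖ ≤ K * r := mul_le_mul_of_nonneg_left hs.le hK
      have h2 : K * r < h / 2 := by
        rw [hr, mul_div_assoc', div_lt_div_iff₀ (by positivity) two_pos]
        nlinarith
      calc K * ‖s‖ ≤ K * r := h1
        _ < h / 2 := h2
        _ < t := ht1
    · have : ‖s‖ ^ 2 + t ^ 2 < h ^ 2 := by nlinarith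
      nlinarith
  have hbound : ∀ p ∈ A, ENNReal.ofReal (1 / (64 * h ^ 6)) ≤
      ENNReal.ofReal (1 / (Real.sqrt (‖p.1‖ ^ 2 + p.2 ^ 2) + h) ^ 6) := by
    rintro ⟨s, t⟩ ⟨hs, ht1, ht2⟩
    simp only [Metric.mem_ball, dist_zero_right] at hs
    have hs2 : ‖s‖ < h / 2 := hs.trans_le hr2
    have hsn : 0 ≤ ‖s‖ := norm_nonneg s
    apply ENNReal.ofReal_le_ofReal
    have hle2 : ‖s‖ ^ 2 + t ^ 2 ≤ h ^ 2 := by nlinarith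
    have hsq : Real.sqrt (‖s‖ ^ 2 + t ^ 2) ≤ h := by
      calc Real.sqrt (‖s‖ ^ 2 + t ^ 2) ≤ Real.sqrt (h ^ 2) := Real.sqrt_le_sqrt hle2
        _ = h := by rw [Real.sqrt_sq h0.le]
    have hsqnn : 0 ≤ Real.sqrt (‖s‖ ^ 2 + t ^ 2) := Real.sqrt_nonneg _
    have hpow : (Real.sqrt (‖s‖ ^ 2 + t ^ 2) + h) ^ 6 ≤ 64 * h ^ 6 := by
      calc (Real.sqrt (‖s‖ ^ 2 + t ^ 2) + h) ^ 6 ≤ (2 * h) ^ 6 := by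
            apply pow_le_pow_left₀ (by positivity); linarith
        _ = 64 * h ^ 6 := by ring
    apply one_div_le_one_div_of_le (by positivity) hpow
  have hmeas : Measurable (fun p : EuclideanSpace ℝ (Fin 2) × ℝ =>
      ENNReal.ofReal (1 / (Real.sqrt (‖p.1‖ ^ 2 + p.2 ^ 2) + h) ^ 6)) := by
    fun_prop
  have hvolA : volume A = ENNReal.ofReal (r ^ 2) * V * ENNReal.ofReal (h / 5) := by
    rw [hA, Measure.volume_eq_prod, Measure.prod_prod, Real.volume_Ioo,
      Measure.addHaar_ball _ _ hr0.le]
    simp only [finrank_euclideanSpace_fin]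
    congr 1
    congr 1
    ring
  calc ENNReal.ofReal (V.toReal / (1280 * (K + 1) ^ 2) / h ^ 3)
      = ENNReal.ofReal (1 / (64 * h ^ 6)) * volume A := by
        rw [hvolA, ← ENNReal.ofReal_toReal hVtop, ← ENNReal.ofReal_mul (by positivity),
          ← ENNReal.ofReal_mul (by positivity), ← ENNReal.ofReal_mul (by positivity)]
        congr 1
        rw [hr, ENNReal.toReal_ofReal hVt0.le]
        field_simp
        ring
    _ = ∫⁻ _ in A, ENNReal.ofReal (1 / (64 * h ^ 6)) := by
        rw [setLIntegral_const, mul_comm]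
    _ ≤ ∫⁻ p in A, ENNReal.ofReal (1 / (Real.sqrt (‖p.1‖ ^ 2 + p.2 ^ 2) + h) ^ 6) :=
        setLIntegral_mono hmeas hbound
    _ ≤ _ := lintegral_mono_set hsub
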